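/- Every closed walk in H(d,2) based at the all-zeros vertex is ×-homotopic rel endpoints to a closed walk lying entirely in the subgraph of vertices whose last coordinate is 0 (which is isomorphic to H(d-1,2)). -/

import Mathlib

/-- The Hamming graph `H(d,q)`: vertices are functions `Fin d → Fin q`,
adjacent iff they differ in exactly one coordinate. -/
def hammingGraph (d q : ℕ) : SimpleGraph (Fin d → Fin q) where
  Adj v w := ∃! i, v i ≠ w i
  symm := by
    constructor
    rintro v w ⟨i, hi, hu⟩
    exact ⟨i, hi.symm, fun j hj => hu j hj.symm⟩
  loopless := by
    constructor
    rintro v ⟨i, hi, -⟩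
    exact hi rfl

/-- `l` is (the list of vertices of) a walk in `G` from `a` to `b`. -/
def IsWalkOn {V : Type*} (G : SimpleGraph V) (a b : V) (l : List V) : Prop :=
  l.Chain' G.Adj ∧ l.head? = some a ∧ l.getLast? = some b

/-- Elementary moves on walks: prunes (and their inverses, anti-prunes,
via symmetry) and spider moves. -/
inductive Move {V : Type*} (G : SimpleGraph V) : List V → List V → Prop
  | prune (xs ys : List V) (u v : V) (huv : G.Adj u v) :
      Move G (xs ++ u :: v :: u :: ys) (xs ++ u :: ys)
  | spider (xs ys : List V) (u v v' w : V) (hne : v ≠ v')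
      (h1 : G.Adj u v') (h2 : G.Adj v' w) :
      Move G (xs ++ u :: v :: w :: ys) (xs ++ u :: v' :: w :: ys)

/-- ×-homotopy rel endpoints: the equivalence relation generated by prunes,
anti-prunes and spider moves. -/
def Homotopic {V : Type*} (G : SimpleGraph V) : List V → List V → Prop :=
  Relation.EqvGen (Move G)

/-- Concatenation of walks sharing an endpoint. -/
def wcat {V : Type*} (l1 l2 : List V) : List V := l1 ++ l2.tail

/-- Concatenation of a list of closed walks based at `z`. -/
def wprod {V : Type*} (z : V) (ws : List (List V)) : List V := ws.foldr wcat [z]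

/-- `u` and `v` differ exactly in coordinate `i`. -/
def DiffAt {d q : ℕ} (u v : Fin d → Fin q) (i : Fin d) : Prop :=
  u i ≠ v i ∧ ∀ j, j ≠ i → u j = v j

/-- A ground walk in coordinate `i`: a closed 3-walk at the all-zeros vertex
whose intermediate vertices are nonzero only in coordinate `i`. -/
def IsGroundWalk (d q : ℕ) [NeZero q] (i : Fin d) (l : List (Fin d → Fin q)) : Prop :=
  ∃ a b : Fin q, a ≠ 0 ∧ b ≠ 0 ∧ a ≠ b ∧
    l = [(0 : Fin d → Fin q), Function.update (0 : Fin d → Fin q) i a,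
      Function.update (0 : Fin d → Fin q) i b, 0]

/-- Number of steps of a walk in which coordinate `i` changes. -/
def changeCount {d q : ℕ} (i : Fin d) : List (Fin d → Fin q) → ℕ
  | x :: y :: rest => (if x i = y i then 0 else 1) + changeCount i (y :: rest)
  | _ => 0


namespace Stmt4Aux

variable {α : Type*}

lemma head?_eq_tail (xs : List α) (u : α) (t t' : List α) :
    (xs ++ u :: t).head? = (xs ++ u :: t').head? := by
  cases xs <;> simp

lemma decompA (p : α → Prop) [DecidablePred p] :
    ∀ l : List α, (∀ a, l.head? = some a → p a) → (∃ x ∈ l, ¬ p x) →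
    ∃ xs u v ys, l = xs ++ u :: v :: ys ∧ p u ∧ ¬ p v := by
  intro l
  induction l with
  | nil => rintro _ ⟨x, hx, _⟩; simp at hx
  | cons a t ih =>
    intro hh hbad
    have hpa : p a := hh a rfl
    obtain ⟨x, hx, hxbad⟩ := hbad
    have hxt : x ∈ t := by
      rcases List.mem_cons.mp hx with h | h
      · exact absurd (h ▸ hpa) hxbad
      · exact h
    match t, hxt with
    | b :: t', hxt =>
      by_cases hpb : p b
      · obtain ⟨xs, u, v, ys, heq, hu, hv⟩ := ih (fun c hc => by
          simp only [List.head?_cons, Option.some.injEq] at hc; exact hc ▸ hpb)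
          ⟨x, hxt, hxbad⟩
        exact ⟨a :: xs, u, v, ys, by rw [heq]; rfl, hu, hv⟩
      · exact ⟨[], a, b, t', rfl, hpa, hpb⟩

lemma fin2_eq (a b c : Fin 2) (h1 : a ≠ c) (h2 : b ≠ c) : a = b := by
  revert h1 h2; revert a b c; decide

end Stmt4Aux

open Stmt4Aux in
lemma stmt4_key {d : ℕ} (e : Fin d) : ∀ (n : ℕ) (l : List (Fin d → Fin 2)),
    l.countP (fun x => decide (x e ≠ 0)) ≤ n →
    IsWalkOn (hammingGraph d 2) 0 0 l →
    ∃ l', Homotopic (hammingGraph d 2) l l' ∧ IsWalkOn (hammingGraph d 2) 0 0 l' ∧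
      ∀ v ∈ l', v e = 0 := by
  intro n
  induction n with
  | zero =>
    intro l hc hw
    refine ⟨l, Relation.EqvGen.refl l, hw, fun v hv => ?_⟩
    have := List.countP_eq_zero.mp (Nat.le_zero.mp hc) v hv
    simpa using this
  | succ n ih =>
    intro l hc hw
    by_cases hall : ∀ v ∈ l, v e = 0
    · exact ⟨l, Relation.EqvGen.refl l, hw, hall⟩
    push_neg at hall
    obtain ⟨hch, hhd, hlast⟩ := hw
    obtain ⟨xs, u, v, ys1, hl, hpu, hpv⟩ := decompA (fun x : Fin d → Fin 2 => x e = 0) l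
      (fun a ha => by rw [hhd] at ha; cases ha; rfl)
      ⟨hall.choose, hall.choose_spec.1, hall.choose_spec.2⟩
    match ys1, hl with
    | [], hl =>
      exfalso
      rw [hl, List.getLast?_append_cons, List.getLast?_cons_cons] at hlast
      have hv0 : v = 0 := by simpa using hlast
      exact hpv (by simp [hv0])
    | w :: ys, hl =>
      rw [hl, List.Chain', List.isChain_append] at hch
      obtain ⟨hchxs, hch2, hlink⟩ := hch
      rw [List.isChain_cons_cons] at hch2
      obtain ⟨huv, hch3⟩ := hch2
      rw [List.isChain_cons_cons] at hch3
      obtain ⟨hvw, hch4⟩ := hch3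
      obtain ⟨i, hi, hiu⟩ := huv
      have huve : u e ≠ v e := by rw [hpu]; exact fun h => hpv h.symm
      have hie : i = e := (hiu e huve).symm
      have huvk : ∀ k, k ≠ e → u k = v k := by
        intro k hk
        by_contra hne
        exact hk ((hiu k hne).trans hie)
      obtain ⟨j, hj, hju⟩ := hvw
      have hhd' : ∀ t : List (Fin d → Fin 2), (xs ++ u :: t).head? = some 0 := by
        intro t
        rw [head?_eq_tail xs u t (v :: w :: ys), ← hl, hhd]
      by_cases hwe : w e = 0
      · -- prune case : w = u
        have hje : j = e := (hju e (show v e ≠ w e from fun h => hpv (h.trans hwe))).symm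
        have hwu : w = u := by
          funext k
          by_cases hk : k = e
          · rw [hk, hwe, hpu]
          · have hvwk : v k = w k := by
              by_contra hne
              exact hk ((hju k hne).trans hje)
            rw [← hvwk, ← huvk k hk]
        rw [hwu] at hl hch4
        have hmove : Move (hammingGraph d 2) l (xs ++ u :: ys) := by
          rw [hl]
          exact Move.prune xs ys u v ⟨i, hi, hiu⟩
        have hcount : (xs ++ u :: ys).countP (fun x => decide (x e ≠ 0)) ≤ n := by
          rw [hl] at hc
          set P : (Fin d → Fin 2) → Bool := fun x => decide (x e ≠ 0) with hP
          have h1 : P u = false := by simp [hP, hpu]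
          have h2 : P v = true := by simp [hP, hpv]
          simp only [List.countP_append, List.countP_cons, h1, h2,
            Bool.false_eq_true, if_false, if_true] at hc ⊢
          omega
        have hwalk2 : IsWalkOn (hammingGraph d 2) 0 0 (xs ++ u :: ys) := by
          refine ⟨?_, hhd' ys, ?_⟩
          · rw [List.Chain', List.isChain_append]
            exact ⟨hchxs, hch4, fun x hx y hy => hlink x hx y (by simpa using hy)⟩
          · rw [List.getLast?_append_cons]
            rw [hl, List.getLast?_append_cons, List.getLast?_cons_cons,
              List.getLast?_cons_cons] at hlast
            exact hlast
        obtain ⟨l', hh, hw', hall'⟩ := ih (xs ++ u :: ys) hcount hwalk2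
        exact ⟨l', Relation.EqvGen.trans _ _ _ (Relation.EqvGen.rel _ _ hmove) hh, hw', hall'⟩
      · -- spider case
        have hvwe : v e = w e := by
          by_contra hne
          exact hwe (fin2_eq (w e) 0 (v e) (fun h => hne h.symm) (fun h => hpv h.symm))
        have hje : j ≠ e := fun h => (h ▸ hj) hvwe
        have hv'e : Function.update u j (w j) e = 0 := by
          rw [Function.update_of_ne (fun h => hje h.symm), hpu]
        have hvne : v ≠ Function.update u j (w j) := fun h => hpv (h ▸ hv'e)
        have hujv : u j = v j := huvk j hje
        have huv' : (hammingGraph d 2).Adj u (Function.update u j (w j)) := by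
          refine ⟨j, show u j ≠ Function.update u j (w j) j from ?_, fun k hk => ?_⟩
          · rw [Function.update_self]
            exact fun h => hj (hujv ▸ h)
          · by_contra hkj
            exact hk (by simp [Function.update_of_ne hkj])
        have hv'w : (hammingGraph d 2).Adj (Function.update u j (w j)) w := by
          refine ⟨e, show Function.update u j (w j) e ≠ w e from ?_, fun k hk => ?_⟩
          · rw [hv'e]
            exact fun h => hwe h.symm
          · by_contra hke
            have hk' : Function.update u j (w j) k ≠ w k := hk
            by_cases hkj : k = j
            · subst hkj
              exact hk' (by simp)
            · have hvk : v k = w k := by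
                by_contra hne
                exact hkj (hju k hne)
              exact hk' (by rw [Function.update_of_ne hkj, huvk k (fun h => hke h), hvk])
        have hmove : Move (hammingGraph d 2) l (xs ++ u :: Function.update u j (w j) :: w :: ys) := by
          rw [hl]
          exact Move.spider xs ys u v (Function.update u j (w j)) w hvne huv' hv'w
        have hcount : (xs ++ u :: Function.update u j (w j) :: w :: ys).countP
            (fun x => decide (x e ≠ 0)) ≤ n := by
          rw [hl] at hc
          set P : (Fin d → Fin 2) → Bool := fun x => decide (x e ≠ 0) with hP
          have h1 : P v = true := by simp [hP, hpv]
          have h2 : P (Function.update u j (w j)) = false := by simp [hP, hv'e]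
          simp only [List.countP_append, List.countP_cons, h1, h2,
            Bool.false_eq_true, if_false, if_true] at hc ⊢
          omega
        have hwalk2 : IsWalkOn (hammingGraph d 2) 0 0
            (xs ++ u :: Function.update u j (w j) :: w :: ys) := by
          refine ⟨?_, hhd' _, ?_⟩
          · rw [List.Chain', List.isChain_append, List.isChain_cons_cons, List.isChain_cons_cons]
            exact ⟨hchxs, ⟨huv', hv'w, hch4⟩,
              fun x hx y hy => hlink x hx y (by simpa using hy)⟩
          · rw [List.getLast?_append_cons, List.getLast?_cons_cons]
            rw [hl, List.getLast?_append_cons, List.getLast?_cons_cons] at hlast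
            exact hlast
        obtain ⟨l', hh, hw', hall'⟩ := ih _ hcount hwalk2
        exact ⟨l', Relation.EqvGen.trans _ _ _ (Relation.EqvGen.rel _ _ hmove) hh, hw', hall'⟩

/-- every closed walk in `H(d,2)` based at the all-zeros vertex is
×-homotopic rel endpoints to a closed walk lying in the subgraph of vertices whose
last coordinate is `0`. -/
theorem stmt4 (d : ℕ) (hd : 0 < d) (l : List (Fin d → Fin 2))
    (hl : IsWalkOn (hammingGraph d 2) 0 0 l) :
    ∃ l', Homotopic (hammingGraph d 2) l l' ∧ IsWalkOn (hammingGraph d 2) 0 0 l' ∧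
      ∀ v ∈ l', v ⟨d - 1, by omega⟩ = 0 := by
  exact stmt4_key ⟨d - 1, by omega⟩ _ l le_rfl hl
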